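/- Let $Q = (q_n)$ be a basic sequence with $q_n \to \infty$ and $\lim_{n\to\infty} (\log q_n)/(\sum_{i=1}^n \log q_i) = 0$, and let $S \subseteq \mathbb{N}$ be such that the mass dimension $\gamma = \dim_M(S)$ exists. Then the set of real numbers all of whose $Q$-Cantor series digits lie in $S$, i.e., $\{x : E_n(x) \in S \text{ for all } n \ge 1\}$, has Hausdorff dimension at most $\gamma$. -/

import Mathlib

open scoped Classical ENNReal NNReal
open Filter MeasureTheory

noncomputable section

/-- Product of the first `n` bases of a basic sequence. -/
def cantorProd (q : ℕ → ℕ) (n : ℕ) : ℝ := ∏ i ∈ Finset.range n, (q i : ℝ)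

/-- `E` is the sequence of digits of the `Q`-Cantor series expansion of `x`
(the digit `E n` is the digit `E_{n+1}` of the paper, in base `q n = q_{n+1}`). -/
def IsCantorExp (q : ℕ → ℕ) (x : ℝ) (E : ℕ → ℕ) : Prop :=
  (∀ n, E n < q n) ∧ (∀ m, ∃ n, m ≤ n ∧ E n ≠ q n - 1) ∧
  x = (⌊x⌋ : ℝ) + ∑' n, (E n : ℝ) / cantorProd q (n + 1)

/-- Number of occurrences of the block `B` of length `k` among the first `n` digits. -/
def blockCount (E : ℕ → ℕ) (k : ℕ) (B : Fin k → ℕ) (n : ℕ) : ℕ :=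
  ((Finset.range (n + 1 - k)).filter (fun j => ∀ i : Fin k, E (j + i) = B i)).card

/-- `Q_n^{(k)}`. -/
def Qnk (q : ℕ → ℕ) (k n : ℕ) : ℝ :=
  ∑ j ∈ Finset.range n, 1 / ∏ i ∈ Finset.range k, (q (j + i) : ℝ)

/-- `x` is `Q`-normal of order `k`. -/
def QNormalOrder (q : ℕ → ℕ) (k : ℕ) (x : ℝ) : Prop :=
  ∃ E, IsCantorExp q x E ∧ ∀ B : Fin k → ℕ,
    Tendsto (fun n => (blockCount E k B n : ℝ) / Qnk q k n) atTop (nhds 1)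

/-- `x` is `Q`-ratio normal of order `k`. -/
def QRatioNormalOrder (q : ℕ → ℕ) (k : ℕ) (x : ℝ) : Prop :=
  ∃ E, IsCantorExp q x E ∧ ∀ B₁ B₂ : Fin k → ℕ,
    Tendsto (fun n => (blockCount E k B₁ n : ℝ) / (blockCount E k B₂ n : ℝ))
      atTop (nhds 1)

/-- A sequence of reals is uniformly distributed mod 1. -/
def UDMod1 (u : ℕ → ℝ) : Prop :=
  ∀ a b : ℝ, 0 ≤ a → a ≤ b → b ≤ 1 →
    Tendsto
      (fun N => (((Finset.range N).filter
          (fun n => Int.fract (u n) ∈ Set.Ico a b)).card : ℝ) / N)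
      atTop (nhds (b - a))

/-- `x` is `Q`-distribution normal. -/
def QDistNormal (q : ℕ → ℕ) (x : ℝ) : Prop :=
  UDMod1 (fun n => cantorProd q n * x)

namespace CA
variable {q : ℕ → ℕ}

lemma prod_succ (q : ℕ → ℕ) (n : ℕ) :
    cantorProd q (n + 1) = cantorProd q n * q n := Finset.prod_range_succ _ _

lemma two_pow_le (hq : ∀ n, 2 ≤ q n) (n : ℕ) : (2:ℝ)^n ≤ cantorProd q n := by
  rw [cantorProd]
  calc (2:ℝ)^n = ∏ _i ∈ Finset.range n, (2:ℝ) := by rw [Finset.prod_const, Finset.card_range]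
    _ ≤ ∏ i ∈ Finset.range n, (q i : ℝ) :=
      Finset.prod_le_prod (fun i _ => by norm_num) (fun i _ => by exact_mod_cast hq i)

lemma prod_pos (hq : ∀ n, 2 ≤ q n) (n : ℕ) : 0 < cantorProd q n :=
  lt_of_lt_of_le (by positivity) (two_pow_le hq n)

lemma one_le_prod (hq : ∀ n, 2 ≤ q n) (n : ℕ) : 1 ≤ cantorProd q n :=
  le_trans (one_le_pow₀ (by norm_num)) (two_pow_le hq n)

lemma term_le (hq : ∀ n, 2 ≤ q n) {E : ℕ → ℕ} (hE : ∀ n, E n < q n) (k : ℕ) :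
    (E k : ℝ) / cantorProd q (k + 1) ≤ 1 / cantorProd q k - 1 / cantorProd q (k+1) := by
  have hP := prod_pos hq k
  have hq0 : (0:ℝ) < q k := by have := hq k; positivity
  rw [prod_succ]
  have hE' : (E k : ℝ) ≤ (q k : ℝ) - 1 := by
    have h1 : (E k : ℕ) + 1 ≤ q k := hE k
    have : ((E k : ℕ) : ℝ) + 1 ≤ (q k : ℝ) := by exact_mod_cast h1
    linarith
  rw [div_sub_div _ _ (ne_of_gt hP) (by positivity), div_le_div_iff₀ (by positivity) (by positivity)]
  nlinarith [mul_pos hP hq0, mul_pos (mul_pos hP hq0) hP]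

lemma summable_g (hq : ∀ n, 2 ≤ q n) {E : ℕ → ℕ} (hE : ∀ n, E n < q n) :
    Summable (fun n => (E n : ℝ) / cantorProd q (n + 1)) := by
  have hgeom : Summable (fun n : ℕ => (2:ℝ)⁻¹ ^ n) :=
    summable_geometric_of_lt_one (by norm_num) (by norm_num)
  refine Summable.of_nonneg_of_le (fun n => div_nonneg (Nat.cast_nonneg _) (prod_pos hq _).le) ?_ hgeom
  intro n
  · 
    have h2 : (0:ℝ) < cantorProd q (n+1) := prod_pos hq (n+1)
    have h3 : (0:ℝ) < 1/cantorProd q (n+1) := by positivity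
    have h1 : (E n : ℝ) / cantorProd q (n+1) ≤ 1 / cantorProd q n := by
      linarith [term_le hq hE n]
    refine h1.trans ?_
    rw [one_div, inv_pow]
    exact inv_anti₀ (by positivity) (two_pow_le hq n)

lemma tail_le (hq : ∀ n, 2 ≤ q n) {E : ℕ → ℕ} (hE : ∀ n, E n < q n) (n : ℕ) :
    ∑' k, (E (n + k) : ℝ) / cantorProd q (n + k + 1) ≤ 1 / cantorProd q n := by
  apply Real.tsum_le_of_sum_range_le (fun k => div_nonneg (Nat.cast_nonneg _) (prod_pos hq _).le)
  intro m
  have key : ∀ m, ∑ k ∈ Finset.range m, (E (n + k) : ℝ) / cantorProd q (n + k + 1)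
      ≤ 1 / cantorProd q n - 1 / cantorProd q (n + m) := by
    intro m
    calc ∑ k ∈ Finset.range m, (E (n + k) : ℝ) / cantorProd q (n + k + 1)
        ≤ ∑ k ∈ Finset.range m, (1 / cantorProd q (n + k) - 1 / cantorProd q (n + k + 1)) :=
          Finset.sum_le_sum (fun k _ => term_le hq hE (n + k))
      _ = 1 / cantorProd q n - 1 / cantorProd q (n + m) := by
          have := Finset.sum_range_sub' (fun k => 1 / cantorProd q (n + k)) m
          simpa [add_assoc] using this
  have h2 : (0:ℝ) < 1 / cantorProd q (n + m) := by have := prod_pos hq (n+m); positivity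
  linarith [key m]


lemma filter_eq (S : Set ℕ) (Q : ℕ) :
    (Finset.range Q).filter (fun m => m ∈ S) =
    (Finset.range (2*Q)).filter (fun m => m ∈ S ∧ 2 * m < 2*Q) := by
  ext m
  simp only [Finset.mem_filter, Finset.mem_range]
  constructor
  · rintro ⟨h1, h2⟩; exact ⟨by omega, h2, by omega⟩
  · rintro ⟨h1, h2, h3⟩; exact ⟨by omega, h2⟩

lemma card_bound (hlim : Tendsto q atTop atTop) (S : Set ℕ) (γ : ℝ)
    (hmass : Tendsto
      (fun n : ℕ => Real.log (((Finset.range n).filter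
          (fun m => m ∈ S ∧ 2 * m < n)).card : ℝ) / Real.log n)
      atTop (nhds γ)) (hγ : 0 ≤ γ) {ε' : ℝ} (hε' : 0 < ε') :
    ∃ N₀ : ℕ, ∀ i ≥ N₀,
      ((((Finset.range (q i)).filter (fun m => m ∈ S)).card : ℝ)) ≤ (q i : ℝ) ^ (γ + 2*ε') := by
  set f : ℕ → ℕ := fun n => ((Finset.range n).filter (fun m => m ∈ S ∧ 2 * m < n)).card with hf
  -- Step A : eventually f n ≤ n ^ (γ+ε')
  have hA : ∀ᶠ n : ℕ in atTop, (f n : ℝ) ≤ (n:ℝ) ^ (γ + ε') := by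
    have h1 : ∀ᶠ n : ℕ in atTop,
        Real.log (f n) / Real.log n < γ + ε' :=
      hmass.eventually (Filter.Tendsto.eventually_lt_const (by linarith) tendsto_id)
    filter_upwards [h1, eventually_ge_atTop 2] with n hn h2
    have hlogn : 0 < Real.log n := Real.log_pos (by exact_mod_cast h2)
    rcases Nat.eq_zero_or_pos (f n) with h0 | h0
    · rw [h0]; push_cast; positivity
    · have hf1 : (1:ℝ) ≤ (f n : ℝ) := by exact_mod_cast h0
      have : Real.log (f n) < (γ + ε') * Real.log n := (div_lt_iff₀ hlogn).1 hn
      calc (f n : ℝ) = Real.exp (Real.log (f n)) := (Real.exp_log (by linarith)).symm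
        _ ≤ Real.exp ((γ + ε') * Real.log n) := Real.exp_le_exp.2 this.le
        _ = (n:ℝ) ^ (γ + ε') := by
            rw [Real.rpow_def_of_pos (by positivity : (0:ℝ) < (n:ℝ)), mul_comm]
  obtain ⟨M, hM⟩ := hA.exists_forall_of_atTop
  -- threshold for q
  set X : ℝ := (2:ℝ) ^ ((γ + ε') / ε') with hX
  have hB : ∀ᶠ i in atTop, M ≤ 2 * q i ∧ X ≤ (q i : ℝ) := by
    have h1 : ∀ᶠ i in atTop, M ≤ q i := hlim.eventually (eventually_ge_atTop M)
    have h2 : ∀ᶠ i in atTop, ⌈X⌉₊ ≤ q i := hlim.eventually (eventually_ge_atTop ⌈X⌉₊)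
    filter_upwards [h1, h2] with i hi1 hi2
    refine ⟨by omega, le_trans (Nat.le_ceil X) (by exact_mod_cast hi2)⟩
  obtain ⟨N₀, hN₀⟩ := hB.exists_forall_of_atTop
  refine ⟨N₀, fun i hi => ?_⟩
  obtain ⟨hiM, hiX⟩ := hN₀ i hi
  have hq1 : (0:ℝ) < (q i : ℝ) := lt_of_lt_of_le (by positivity) hiX
  have key : (((Finset.range (q i)).filter (fun m => m ∈ S)).card : ℝ) = (f (2 * q i) : ℝ) := by
    rw [hf]; norm_cast; rw [filter_eq]
  rw [key]
  calc (f (2 * q i) : ℝ) ≤ ((2 * q i : ℕ) : ℝ) ^ (γ + ε') := hM _ hiM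
    _ = (2:ℝ) ^ (γ + ε') * (q i : ℝ) ^ (γ + ε') := by
        push_cast; rw [Real.mul_rpow (by norm_num) (by positivity)]
    _ ≤ (q i : ℝ) ^ ε' * (q i : ℝ) ^ (γ + ε') := by
        have h2 : (2:ℝ) ^ (γ + ε') ≤ (q i : ℝ) ^ ε' := by
          have := Real.rpow_le_rpow (by positivity : (0:ℝ) ≤ X) hiX (le_of_lt hε')
          rwa [hX, ← Real.rpow_mul (by norm_num), div_mul_cancel₀ _ (ne_of_gt hε')] at this
        exact mul_le_mul_of_nonneg_right h2 (Real.rpow_nonneg hq1.le _)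
    _ = (q i : ℝ) ^ (γ + 2*ε') := by
        rw [← Real.rpow_add hq1]; ring_nf


lemma dimT (hq : ∀ n, 2 ≤ q n) (hlim : Tendsto q atTop atTop) (S : Set ℕ) (γ : ℝ)
    (hmass : Tendsto
      (fun n : ℕ => Real.log (((Finset.range n).filter
          (fun m => m ∈ S ∧ 2 * m < n)).card : ℝ) / Real.log n)
      atTop (nhds γ)) (hγ : 0 ≤ γ) {ε : ℝ} (hε : 0 < ε) :
    dimH {y : ℝ | ∃ E : ℕ → ℕ, (∀ n, E n ∈ S ∧ E n < q n) ∧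
      y = ∑' n, (E n : ℝ) / cantorProd q (n + 1)} ≤ ENNReal.ofReal (γ + ε) := by
  set T := {y : ℝ | ∃ E : ℕ → ℕ, (∀ n, E n ∈ S ∧ E n < q n) ∧
      y = ∑' n, (E n : ℝ) / cantorProd q (n + 1)} with hT
  set ε' : ℝ := ε / 3 with hε'def
  have hε' : 0 < ε' := by positivity
  set d : ℝ := γ + ε with hd
  have hd0 : 0 < d := by positivity
  set D : ℕ → Finset ℕ := fun i => (Finset.range (q i)).filter (fun m => m ∈ S) with hD
  obtain ⟨N₀, hN₀⟩ := card_bound hlim S γ hmass hγ hε'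
  -- the covering sets
  set c : ∀ n : ℕ, (∀ i : Fin n, {x // x ∈ D (i:ℕ)}) → ℝ :=
    fun n f => ∑ i : Fin n, ((f i : ℕ) : ℝ) / cantorProd q ((i:ℕ)+1) with hc
  set t : ∀ n : ℕ, (∀ i : Fin n, {x // x ∈ D (i:ℕ)}) → Set ℝ :=
    fun n f => Set.Icc (c n f) (c n f + 1 / cantorProd q n) with ht
  have hcover : ∀ n : ℕ, T ⊆ ⋃ f, t n f := by
    intro n y hy
    obtain ⟨E, hE, hy⟩ := hy
    have hE2 : ∀ k, E k < q k := fun k => (hE k).2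
    have hg := summable_g hq hE2
    set f : ∀ i : Fin n, {x // x ∈ D (i:ℕ)} := fun i =>
      ⟨E i, by simp only [hD, Finset.mem_filter, Finset.mem_range]; exact ⟨(hE i).2, (hE i).1⟩⟩
    refine Set.mem_iUnion.2 ⟨f, ?_⟩
    have hcf : c n f = ∑ k ∈ Finset.range n, (E k : ℝ) / cantorProd q (k+1) := by
      rw [hc]
      exact Fin.sum_univ_eq_sum_range (fun k => (E k : ℝ) / cantorProd q (k+1)) n
    have hsplit : y = c n f + ∑' k, (E (k + n) : ℝ) / cantorProd q (k + n + 1) := by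
      rw [hy, hcf, ← Summable.sum_add_tsum_nat_add n hg]
    have htail1 : (0:ℝ) ≤ ∑' k, (E (k + n) : ℝ) / cantorProd q (k + n + 1) :=
      tsum_nonneg (fun k => div_nonneg (Nat.cast_nonneg _) (prod_pos hq _).le)
    have htail2 : ∑' k, (E (k + n) : ℝ) / cantorProd q (k + n + 1) ≤ 1 / cantorProd q n := by
      have := tail_le hq hE2 n
      have hcongr : ∑' k, (E (k + n) : ℝ) / cantorProd q (k + n + 1)
          = ∑' k, (E (n + k) : ℝ) / cantorProd q (n + k + 1) := by
        apply tsum_congr; intro k; rw [add_comm k n]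
      rwa [hcongr]
    exact ⟨by linarith [hsplit], by linarith [hsplit]⟩
  have hdiam : ∀ (n : ℕ) (f : ∀ i : Fin n, {x // x ∈ D (i:ℕ)}),
      EMetric.diam (t n f) = ENNReal.ofReal (1 / cantorProd q n) := by
    intro n f
    rw [ht]
    simp only
    rw [EMetric.diam, Real.ediam_Icc, add_sub_cancel_left]
  -- the real sequence
  set a : ℕ → ℝ := fun n => (∏ i ∈ Finset.range n, ((D i).card : ℝ)) * cantorProd q n ^ (-d)
    with ha
  have ha0 : ∀ n, 0 ≤ a n := by
    intro n
    apply mul_nonneg (Finset.prod_nonneg (fun i _ => Nat.cast_nonneg _))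
    exact Real.rpow_nonneg (prod_pos hq n).le _
  -- sum identity
  have hsum : ∀ n : ℕ, (∑ f : (∀ i : Fin n, {x // x ∈ D (i:ℕ)}), EMetric.diam (t n f) ^ d)
      = ENNReal.ofReal (a n) := by
    intro n
    have hcard : Fintype.card (∀ i : Fin n, {x // x ∈ D (i:ℕ)})
        = ∏ i ∈ Finset.range n, (D i).card := by
      rw [Fintype.card_pi]
      simp only [Fintype.card_coe]
      exact Fin.prod_univ_eq_prod_range (fun i => (D i).card) n
    have hPpos := prod_pos hq n
    calc (∑ f : (∀ i : Fin n, {x // x ∈ D (i:ℕ)}), EMetric.diam (t n f) ^ d)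
        = ∑ _f : (∀ i : Fin n, {x // x ∈ D (i:ℕ)}), ENNReal.ofReal (1 / cantorProd q n) ^ d := by
          apply Finset.sum_congr rfl; intro f _; rw [hdiam]
      _ = (Fintype.card (∀ i : Fin n, {x // x ∈ D (i:ℕ)}) : ℝ≥0∞)
            * ENNReal.ofReal (1 / cantorProd q n) ^ d := by
          rw [Finset.sum_const, nsmul_eq_mul]; rfl
      _ = ENNReal.ofReal (a n) := by
          rw [hcard, ENNReal.ofReal_rpow_of_pos (by positivity)]
          rw [← ENNReal.ofReal_natCast, ← ENNReal.ofReal_mul (Nat.cast_nonneg _)]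
          congr 1
          rw [ha]
          push_cast
          congr 1
          rw [one_div, Real.inv_rpow hPpos.le, ← Real.rpow_neg hPpos.le]
  -- tendsto of a
  have htendA : Tendsto a atTop (nhds 0) := by
    set b : ℕ → ℝ := fun i => ((D i).card : ℝ) * (q i : ℝ) ^ (-d) with hb
    have hb0 : ∀ i, 0 ≤ b i := by
      intro i
      apply mul_nonneg (Nat.cast_nonneg _)
      exact Real.rpow_nonneg (by positivity) _
    have hab : ∀ n, a n = ∏ i ∈ Finset.range n, b i := by
      intro n
      rw [ha, hb]
      simp only
      rw [cantorProd, ← Real.finset_prod_rpow _ _ (fun i _ => Nat.cast_nonneg _) (-d),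
        ← Finset.prod_mul_distrib]
    set r0 : ℝ := (2:ℝ) ^ (-ε') with hr0
    have hr0pos : 0 < r0 := Real.rpow_pos_of_pos (by norm_num) _
    have hr0lt : r0 < 1 := Real.rpow_lt_one_of_one_lt_of_neg (by norm_num) (by linarith)
    have hbr : ∀ i ≥ N₀, b i ≤ r0 := by
      intro i hi
      have hqpos : (0:ℝ) < (q i : ℝ) := by have := hq i; positivity
      have h1 : b i ≤ (q i : ℝ) ^ (γ + 2*ε') * (q i : ℝ) ^ (-d) :=
        mul_le_mul_of_nonneg_right (hN₀ i hi) (Real.rpow_nonneg hqpos.le _)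
      have h2 : (q i : ℝ) ^ (γ + 2*ε') * (q i : ℝ) ^ (-d) = (q i : ℝ) ^ (-ε') := by
        rw [← Real.rpow_add hqpos]
        congr 1
        rw [hd, hε'def]; ring
      have h3 : (q i : ℝ) ^ (-ε') ≤ (2:ℝ) ^ (-ε') := by
        rw [Real.rpow_neg hqpos.le, Real.rpow_neg (by norm_num : (0:ℝ) ≤ 2)]
        apply inv_anti₀ (Real.rpow_pos_of_pos (by norm_num) _)
        exact Real.rpow_le_rpow (by norm_num) (by exact_mod_cast hq i) hε'.le
      calc b i ≤ (q i : ℝ) ^ (-ε') := by rw [← h2]; exact h1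
        _ ≤ r0 := h3
    set C : ℝ := ∏ i ∈ Finset.range N₀, b i with hC
    have hC0 : 0 ≤ C := Finset.prod_nonneg (fun i _ => hb0 i)
    have hbound : ∀ n ≥ N₀, a n ≤ (C / r0 ^ N₀) * r0 ^ n := by
      intro n hn
      have hsplit : a n = C * ∏ i ∈ Finset.Ico N₀ n, b i := by
        rw [hab, hC, Finset.range_eq_Ico, ← Finset.prod_Ico_consecutive _ (Nat.zero_le N₀) hn,
          ← Finset.range_eq_Ico]
      have hprod : ∏ i ∈ Finset.Ico N₀ n, b i ≤ r0 ^ (n - N₀) := by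
        calc ∏ i ∈ Finset.Ico N₀ n, b i ≤ ∏ _i ∈ Finset.Ico N₀ n, r0 :=
            Finset.prod_le_prod (fun i _ => hb0 i) (fun i hi => hbr i (Finset.mem_Ico.1 hi).1)
          _ = r0 ^ (n - N₀) := by rw [Finset.prod_const, Nat.card_Ico]
      have hpow : r0 ^ n = r0 ^ (n - N₀) * r0 ^ N₀ := by
        rw [← pow_add]; congr 1; omega
      have : a n ≤ C * r0 ^ (n - N₀) := by
        rw [hsplit]; exact mul_le_mul_of_nonneg_left hprod hC0
      calc a n ≤ C * r0 ^ (n - N₀) := this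
        _ = (C / r0 ^ N₀) * r0 ^ n := by
            rw [hpow]; field_simp
    have hgeo : Tendsto (fun n : ℕ => (C / r0 ^ N₀) * r0 ^ n) atTop (nhds 0) := by
      have := tendsto_pow_atTop_nhds_zero_of_lt_one hr0pos.le hr0lt
      simpa using this.const_mul (C / r0 ^ N₀)
    apply squeeze_zero' (Filter.Eventually.of_forall ha0) _ hgeo
    filter_upwards [eventually_ge_atTop N₀] with n hn
    exact hbound n hn
  -- r sequence
  set r : ℕ → ℝ≥0∞ := fun n => ENNReal.ofReal (1 / cantorProd q n) with hr
  have hrt : Tendsto r atTop (nhds 0) := by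
    have h1 : Tendsto (fun n : ℕ => 1 / cantorProd q n) atTop (nhds 0) := by
      apply squeeze_zero (fun n => one_div_nonneg.2 (prod_pos hq n).le) (g := fun n : ℕ => (2:ℝ)⁻¹ ^ n)
      · intro n
        rw [one_div, inv_pow]
        exact inv_anti₀ (by positivity) (two_pow_le hq n)
      · exact tendsto_pow_atTop_nhds_zero_of_lt_one (by norm_num) (by norm_num)
    have h2 := ENNReal.tendsto_ofReal h1
    rw [ENNReal.ofReal_zero] at h2
    exact h2
  -- Hausdorff measure bound
  have hμ : μH[d] T = 0 := by
    have hle := MeasureTheory.Measure.hausdorffMeasure_le_liminf_sum d T r hrt t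
      (Filter.Eventually.of_forall (fun n => fun f => (hdiam n f).le))
      (Filter.Eventually.of_forall hcover)
    have hlim0 : Tendsto (fun n => ∑ f : ∀ i : Fin n, {x // x ∈ D (i:ℕ)},
        EMetric.diam (t n f) ^ d) atTop (nhds 0) := by
      have := ENNReal.tendsto_ofReal htendA
      rw [ENNReal.ofReal_zero] at this
      exact Tendsto.congr (fun n => (hsum n).symm) this
    have hlim0' : Tendsto (fun n => ∑ f : ∀ i : Fin n, {x // x ∈ D (i:ℕ)},
        Metric.ediam (t n f) ^ d) atTop (nhds 0) := hlim0
    rw [hlim0'.liminf_eq] at hle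
    exact le_antisymm hle zero_le
  have hne : μH[((d.toNNReal : ℝ≥0) : ℝ)] T ≠ ⊤ := by
    rw [Real.coe_toNNReal d hd0.le, hμ]
    exact ENNReal.zero_ne_top
  have := dimH_le_of_hausdorffMeasure_ne_top hne
  rwa [show ((d.toNNReal : ℝ≥0) : ℝ≥0∞) = ENNReal.ofReal (γ + ε) from rfl] at this

end CA

/-- If `q n → ∞`, `log q n / ∑_{i≤n} log q i → 0`, and the mass dimension of
`S` is `γ`, then the set of reals all of whose `Q`-Cantor digits lie in `S`
has Hausdorff dimension at most `γ`. -/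
theorem dimH_digitsIn_le (q : ℕ → ℕ) (hq : ∀ n, 2 ≤ q n)
    (hlim : Tendsto q atTop atTop)
    (hlog : Tendsto
      (fun n => Real.log (q n) / ∑ i ∈ Finset.range (n + 1), Real.log (q i))
      atTop (nhds 0))
    (S : Set ℕ) (γ : ℝ)
    (hmass : Tendsto
      (fun n : ℕ => Real.log (((Finset.range n).filter
          (fun m => m ∈ S ∧ 2 * m < n)).card : ℝ) / Real.log n)
      atTop (nhds γ)) :
    dimH {x : ℝ | ∃ E : ℕ → ℕ, IsCantorExp q x E ∧ ∀ n, E n ∈ S}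
      ≤ ENNReal.ofReal γ := by
  -- γ is nonnegative
  have hγ : 0 ≤ γ := by
    refine ge_of_tendsto hmass ?_
    filter_upwards [eventually_ge_atTop 2] with n hn
    have hlogn : 0 < Real.log n := Real.log_pos (by exact_mod_cast hn)
    set k : ℕ := ((Finset.range n).filter (fun m => m ∈ S ∧ 2 * m < n)).card
    rcases Nat.eq_zero_or_pos k with h0 | h0
    · simp [h0]
    · have : (0:ℝ) ≤ Real.log k := Real.log_natCast_nonneg k
      positivity
  set T := {y : ℝ | ∃ E : ℕ → ℕ, (∀ n, E n ∈ S ∧ E n < q n) ∧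
      y = ∑' n, (E n : ℝ) / cantorProd q (n + 1)} with hT
  -- decomposition into integer translates
  have hsub : {x : ℝ | ∃ E : ℕ → ℕ, IsCantorExp q x E ∧ ∀ n, E n ∈ S}
      ⊆ ⋃ m : ℤ, (fun y : ℝ => y + (m:ℝ)) '' T := by
    rintro x ⟨E, ⟨hE1, _, hE3⟩, hES⟩
    refine Set.mem_iUnion.2 ⟨⌊x⌋, ⟨∑' n, (E n : ℝ) / cantorProd q (n + 1), ?_, ?_⟩⟩
    · exact ⟨E, fun n => ⟨hES n, hE1 n⟩, rfl⟩
    · simp only; linarith [hE3]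
  have hTbound : dimH T ≤ ENNReal.ofReal γ := by
    refine ENNReal.le_of_forall_pos_le_add (fun ε hε _ => ?_)
    have h1 := CA.dimT hq hlim S γ hmass hγ (ε := (ε:ℝ)) (by exact_mod_cast hε)
    rwa [ENNReal.ofReal_add hγ ε.coe_nonneg, ENNReal.ofReal_coe_nnreal] at h1
  calc dimH {x : ℝ | ∃ E : ℕ → ℕ, IsCantorExp q x E ∧ ∀ n, E n ∈ S}
      ≤ dimH (⋃ m : ℤ, (fun y : ℝ => y + (m:ℝ)) '' T) := dimH_mono hsub
    _ = ⨆ m : ℤ, dimH ((fun y : ℝ => y + (m:ℝ)) '' T) := dimH_iUnion _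
    _ ≤ ENNReal.ofReal γ := by
        refine iSup_le (fun m => ?_)
        have hiso : Isometry (fun y : ℝ => y + (m:ℝ)) :=
          Isometry.of_dist_eq (fun a b => by simp [Real.dist_eq])
        rw [hiso.dimH_image]
        exact hTbound
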